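/- For all x ∈ (0, c_KMM], M_MS(x) < M_KMM(x), where M_MS(x) = (π/4)·log(1/(1−2x)), M_KMM(x) = arcsin(πx/(2(1−x))), and c_KMM = 2/(2+π). -/

import Mathlib

open Real

set_option maxHeartbeats 1000000 in
/-- For all `x ∈ (0, c_KMM]` with `c_KMM = 2/(2+π)`, one has
`(π/4) log(1/(1−2x)) < arcsin(πx/(2(1−x)))`. -/
theorem MMS_lt_MKMM (x : ℝ) (hx0 : 0 < x) (hx : x ≤ 2 / (2 + π)) :
    π / 4 * Real.log (1 / (1 - 2 * x)) < Real.arcsin (π * x / (2 * (1 - x))) := by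
  have hπ : (3.141592 : ℝ) < π := Real.pi_gt_d6
  set c : ℝ := 2 / (2 + π) with hc
  have h2π : (0:ℝ) < 2 + π := by linarith
  have hc0 : 0 < c := by positivity
  have hchalf : c < 1 / 2 := by
    rw [hc, div_lt_div_iff₀ h2π (by norm_num)]
    linarith
  set f : ℝ → ℝ := fun t => Real.arcsin (π * t / (2 * (1 - t))) + π / 4 * Real.log (1 - 2 * t)
    with hf
  -- f is strictly monotone on Icc 0 c
  have hmono : StrictMonoOn f (Set.Icc 0 c) := by
    apply strictMonoOn_of_deriv_pos (convex_Icc 0 c)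
    · -- continuity
      apply ContinuousOn.add
      · apply Real.continuous_arcsin.comp_continuousOn
        apply ContinuousOn.div (by fun_prop) (by fun_prop)
        intro t ht
        have : t < 1 / 2 := lt_of_le_of_lt ht.2 hchalf
        intro h; nlinarith [h]
      · apply ContinuousOn.mul continuousOn_const
        apply ContinuousOn.log (by fun_prop)
        intro t ht
        have : t < 1 / 2 := lt_of_le_of_lt ht.2 hchalf
        intro h; nlinarith [h]
    · intro t ht
      rw [interior_Icc] at ht
      obtain ⟨ht0, htc⟩ := ht
      have ht12 : t < 1 / 2 := lt_trans htc hchalf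
      have hu : (0:ℝ) < 1 - t := by linarith
      have hv : (0:ℝ) < 1 - 2 * t := by linarith
      set g : ℝ := π * t / (2 * (1 - t)) with hg
      have hg0 : 0 < g := by positivity
      have hg1 : g < 1 := by
        rw [hg, div_lt_one (by positivity)]
        rw [hc, lt_div_iff₀ h2π] at htc
        nlinarith
      set s : ℝ := Real.sqrt (1 - g ^ 2) with hs
      have hs0 : 0 < s := Real.sqrt_pos.2 (by nlinarith)
      have hs2 : s ^ 2 = 1 - g ^ 2 := Real.sq_sqrt (by nlinarith)
      -- derivative of inner function
      have hinner : HasDerivAt (fun t : ℝ => π * t / (2 * (1 - t)))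
          (π / (2 * (1 - t) ^ 2)) t := by
        have h1 : HasDerivAt (fun t : ℝ => π * t) π t := by
          simpa using (hasDerivAt_id t).const_mul π
        have h2 : HasDerivAt (fun t : ℝ => 2 * (1 - t)) (-2) t := by
          have : HasDerivAt (fun t : ℝ => 1 - t) (-1) t := by
            simpa using (hasDerivAt_id t).const_sub 1
          simpa using this.const_mul 2
        have := h1.div h2 (by positivity)
        refine this.congr_deriv ?_
        rw [div_eq_div_iff (pow_ne_zero 2 (mul_ne_zero two_ne_zero hu.ne')) (mul_ne_zero two_ne_zero (pow_ne_zero 2 hu.ne'))]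
        ring
      have harc : HasDerivAt (fun t : ℝ => Real.arcsin (π * t / (2 * (1 - t))))
          (1 / s * (π / (2 * (1 - t) ^ 2))) t :=
        by have := (Real.hasDerivAt_arcsin (x := g) (by linarith) (ne_of_lt hg1)).comp t hinner; exact this
      have hlog : HasDerivAt (fun t : ℝ => π / 4 * Real.log (1 - 2 * t))
          (π / 4 * ((1 - 2 * t)⁻¹ * (-2))) t := by
        have h2 : HasDerivAt (fun t : ℝ => 1 - 2 * t) (-2) t := by
          simpa using ((hasDerivAt_id t).const_mul 2).const_sub 1
        exact ((Real.hasDerivAt_log (ne_of_gt hv)).comp t h2).const_mul (π / 4)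
      have hD : HasDerivAt f
          (1 / s * (π / (2 * (1 - t) ^ 2)) + π / 4 * ((1 - 2 * t)⁻¹ * (-2))) t :=
        harc.add hlog
      rw [hD.deriv]
      -- positivity of the derivative
      have key : (1 - t) ^ 2 * s < 1 - 2 * t := by
        have hgsq : g ^ 2 * (2 * (1 - t)) ^ 2 = (π * t) ^ 2 := by
          rw [hg]; field_simp
        have hgsq2 : g ^ 2 * (1 - t) ^ 4 = π ^ 2 * t ^ 2 * (1 - t) ^ 2 / 4 := by
          linear_combination ((1 - t) ^ 2 / 4) * hgsq
        have hpi2 : (9.8 : ℝ) < π ^ 2 := by nlinarith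
        have hquad : 2 - 4 * t + t ^ 2 < π ^ 2 * (1 - t) ^ 2 / 4 := by
          nlinarith [sq_nonneg (t - 0.31), sq_nonneg (1 - t), hpi2]
        have hquad2 := mul_lt_mul_of_pos_left hquad (mul_pos ht0 ht0)
        have hsq : ((1 - t) ^ 2 * s) ^ 2 < (1 - 2 * t) ^ 2 := by
          have hpoly : (1 - t) ^ 4 * (1 - g ^ 2) < (1 - 2 * t) ^ 2 := by
            linarith [hgsq2, hquad2]
          calc ((1 - t) ^ 2 * s) ^ 2 = (1 - t) ^ 4 * s ^ 2 := by ring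
            _ = (1 - t) ^ 4 * (1 - g ^ 2) := by rw [hs2]
            _ < (1 - 2 * t) ^ 2 := hpoly
        exact lt_of_pow_lt_pow_left₀ 2 hv.le hsq
      have h1 : π / (2 * (1 - 2 * t)) < 1 / s * (π / (2 * (1 - t) ^ 2)) := by
        rw [one_div, ← div_eq_inv_mul, div_div]
        rw [div_lt_div_iff₀ (by positivity) (by positivity)]
        nlinarith [mul_lt_mul_of_pos_left key (mul_pos two_pos Real.pi_pos)]
      have : π / 4 * ((1 - 2 * t)⁻¹ * (-2)) = -(π / (2 * (1 - 2 * t))) := by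
        field_simp; ring
      rw [this]
      linarith
  have h0mem : (0:ℝ) ∈ Set.Icc (0:ℝ) c := ⟨le_refl 0, le_of_lt hc0⟩
  have hxmem : x ∈ Set.Icc (0:ℝ) c := ⟨le_of_lt hx0, hx⟩
  have := hmono h0mem hxmem hx0
  have hf0 : f 0 = 0 := by
    simp [hf]
  rw [hf0] at this
  have hlogeq : Real.log (1 / (1 - 2 * x)) = -Real.log (1 - 2 * x) := by
    rw [one_div, Real.log_inv]
  rw [hlogeq]
  simp only [hf] at this
  linarith
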